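/- For the state τ = (1/3)(|φ⟩⟨φ| + |ψ⟩⟨ψ| + |ξ⟩⟨ξ|) on ℂ³⊗ℂ³, with |φ⟩ = (|01⟩+|10⟩)/√2, |ψ⟩ = (|12⟩+|21⟩)/√2, |ξ⟩ = (|20⟩+|02⟩)/√2: both Tr_B τ and Tr_A τ equal (1/3)I₃, the nonzero eigenvalue of τ is 1/3 with multiplicity three, and therefore M(τ) = 0. -/

import Mathlib

open Matrix Kronecker Finset
open scoped ComplexOrder

attribute [local instance] Classical.propDecidable

noncomputable section

/-- nearest integer multiple of `y` to `x`, ties broken downward; `0` if `y = 0`. -/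
def nim (y x : ℝ) : ℝ :=
  if y = 0 then 0
  else if x - y * ⌊x / y⌋ ≤ y * ⌈x / y⌉ - x then y * ⌊x / y⌋ else y * ⌈x / y⌉

/-- partial trace over the second (B) factor -/
def ptraceB {α β : Type*} [Fintype α] [Fintype β]
    (ρ : Matrix (α × β) (α × β) ℂ) : Matrix α α ℂ :=
  fun a a' => ∑ b : β, ρ (a, b) (a', b)

/-- partial trace over the first (A) factor -/
def ptraceA {α β : Type*} [Fintype α] [Fintype β]
    (ρ : Matrix (α × β) (α × β) ℂ) : Matrix β β ℂ :=
  fun b b' => ∑ a : α, ρ (a, b) (a, b')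

/-- the (real) eigenvalues of a Hermitian matrix, junk value `0` otherwise -/
def evalsR {n : Type*} [Fintype n] [DecidableEq n] (A : Matrix n n ℂ) : n → ℝ :=
  if h : A.IsHermitian then h.eigenvalues else 0

/-- orthogonal projection onto the η-eigenspace of a Hermitian matrix -/
def eigProj {n : Type*} [Fintype n] [DecidableEq n] (ρ : Matrix n n ℂ) (η : ℝ) :
    Matrix n n ℂ :=
  if h : ρ.IsHermitian then
    ∑ k ∈ univ.filter (fun k => h.eigenvalues k = η),
      vecMulVec (fun i => h.eigenvectorBasis k i) (star fun i => h.eigenvectorBasis k i)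
  else 0

/-- truncation of ρ down to the η-eigenspace: `η • P_η` -/
def trunc {n : Type*} [Fintype n] [DecidableEq n] (ρ : Matrix n n ℂ) (η : ℝ) :
    Matrix n n ℂ := (η : ℂ) • eigProj ρ η

/-- dimension of the η-eigenspace -/
def dimEig {n : Type*} [Fintype n] [DecidableEq n] (ρ : Matrix n n ℂ) (η : ℝ) : ℕ :=
  if h : ρ.IsHermitian then (univ.filter (fun k => h.eigenvalues k = η)).card else 0

/-- a single term of the measure `M` -/
def Mterm (η T lam : ℝ) : ℝ := -(|lam - nim η lam| * Real.logb 2 (lam / T))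

/-- the measure `M` seen from side A -/
def MmeasA {α β : Type*} [Fintype α] [Fintype β] [DecidableEq α] [DecidableEq β]
    (ρ : Matrix (α × β) (α × β) ℂ) : ℝ :=
  ∑ η ∈ Finset.image (evalsR ρ) univ, ∑ i : α,
    Mterm η (η * (dimEig ρ η : ℝ)) (evalsR (ptraceB (trunc ρ η)) i)

/-- the measure `M` seen from side B -/
def MmeasB {α β : Type*} [Fintype α] [Fintype β] [DecidableEq α] [DecidableEq β]
    (ρ : Matrix (α × β) (α × β) ℂ) : ℝ :=
  ∑ η ∈ Finset.image (evalsR ρ) univ, ∑ i : β,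
    Mterm η (η * (dimEig ρ η : ℝ)) (evalsR (ptraceA (trunc ρ η)) i)

/-- the measure `M` of nonclassical correlation -/
def Mmeas {α β : Type*} [Fintype α] [Fintype β] [DecidableEq α] [DecidableEq β]
    (ρ : Matrix (α × β) (α × β) ℂ) : ℝ := (MmeasA ρ + MmeasB ρ) / 2

def IsDensityMatrix {n : Type*} [Fintype n] [DecidableEq n] (ρ : Matrix n n ℂ) : Prop :=
  ρ.PosSemidef ∧ ρ.trace = 1

/-- ρ admits an eigenbasis consisting of product vectors -/
def HasProductEigenbasis {α β : Type*} [Fintype α] [Fintype β] [DecidableEq α] [DecidableEq β]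
    (ρ : Matrix (α × β) (α × β) ℂ) : Prop :=
  ∃ (a : α → α → ℂ) (b : β → β → ℂ) (e : α → β → ℝ),
    (∀ j j', ∑ i, star (a j i) * a j' i = if j = j' then 1 else 0) ∧
    (∀ k k', ∑ i, star (b k i) * b k' i = if k = k' then 1 else 0) ∧
    ρ = ∑ j : α, ∑ k : β,
      (e j k : ℂ) • (vecMulVec (a j) (star (a j)) ⊗ₖ vecMulVec (b k) (star (b k)))


/-- `|φ⟩ = (|01⟩ + |10⟩)/√2` on `ℂ³ ⊗ ℂ³` -/
def ketPhi3 : Fin 3 × Fin 3 → ℂ :=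
  fun p => if p = (0, 1) ∨ p = (1, 0) then ((1 / Real.sqrt 2 : ℝ) : ℂ) else 0
/-- `|ψ⟩ = (|12⟩ + |21⟩)/√2` on `ℂ³ ⊗ ℂ³` -/
def ketPsi3 : Fin 3 × Fin 3 → ℂ :=
  fun p => if p = (1, 2) ∨ p = (2, 1) then ((1 / Real.sqrt 2 : ℝ) : ℂ) else 0
/-- `|ξ⟩ = (|20⟩ + |02⟩)/√2` on `ℂ³ ⊗ ℂ³` -/
def ketXi3 : Fin 3 × Fin 3 → ℂ :=
  fun p => if p = (2, 0) ∨ p = (0, 2) then ((1 / Real.sqrt 2 : ℝ) : ℂ) else 0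

/-- `τ = (1/3)(|φ⟩⟨φ| + |ψ⟩⟨ψ| + |ξ⟩⟨ξ|)` -/
def tauState : Matrix (Fin 3 × Fin 3) (Fin 3 × Fin 3) ℂ :=
  ((1 / 3 : ℝ) : ℂ) • (vecMulVec ketPhi3 (star ketPhi3)
    + vecMulVec ketPsi3 (star ketPsi3) + vecMulVec ketXi3 (star ketXi3))

/-! ### auxiliary lemmas -/

lemma sqrt2sq : (((Real.sqrt 2 : ℝ) : ℂ))⁻¹ * (((Real.sqrt 2 : ℝ) : ℂ))⁻¹ = 1/2 := by
  rw [← mul_inv, ← Complex.ofReal_mul, Real.mul_self_sqrt (by norm_num)]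
  norm_num

lemma sqrt2sq' : (((Real.sqrt 2 : ℝ) : ℂ)) ^ 2 = 2 := by
  rw [sq, ← Complex.ofReal_mul, Real.mul_self_sqrt (by norm_num)]
  norm_num

lemma herm_vmv {n : Type*} [Fintype n] (v : n → ℂ) :
    (vecMulVec v (star v)).IsHermitian := by
  ext i j
  simp [Matrix.conjTranspose_apply, vecMulVec_apply, mul_comm]

lemma tau_herm : tauState.IsHermitian := by
  unfold tauState
  have h := ((herm_vmv ketPhi3).add (herm_vmv ketPsi3)).add (herm_vmv ketXi3)
  unfold Matrix.IsHermitian at h ⊢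
  rw [Matrix.conjTranspose_smul, h]
  norm_num

lemma vmv_mul {n : Type*} [Fintype n] (u v w x : n → ℂ) :
    vecMulVec u v * vecMulVec w x = (∑ i, v i * w i) • vecMulVec u x := by
  ext i j
  simp only [Matrix.mul_apply, vecMulVec_apply, Matrix.smul_apply, smul_eq_mul,
    Finset.sum_mul]
  rw [Finset.sum_congr rfl (fun k _ => by ring : ∀ k ∈ univ,
    u i * v k * (w k * x j) = v k * w k * (u i * x j))]

lemma ip_phi_phi : ∑ p : Fin 3 × Fin 3, (star ketPhi3) p * ketPhi3 p = 1 := by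
  simp [ketPhi3, Fintype.sum_prod_type, Fin.sum_univ_three, Prod.ext_iff, sqrt2sq]
  norm_num [sqrt2sq]

lemma tau_ptB : ptraceB tauState = ((1 / 3 : ℝ) : ℂ) • (1 : Matrix (Fin 3) (Fin 3) ℂ) := by
  ext a c
  fin_cases a <;> fin_cases c <;>
    simp [ptraceB, tauState, vecMulVec, ketPhi3, ketPsi3, ketXi3, Fin.sum_univ_three,
      Prod.ext_iff, Matrix.one_apply, sqrt2sq] <;> ring_nf <;> norm_num [sqrt2sq']

lemma tau_ptA : ptraceA tauState = ((1 / 3 : ℝ) : ℂ) • (1 : Matrix (Fin 3) (Fin 3) ℂ) := by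
  ext a c
  fin_cases a <;> fin_cases c <;>
    simp [ptraceA, tauState, vecMulVec, ketPhi3, ketPsi3, ketXi3, Fin.sum_univ_three,
      Prod.ext_iff, Matrix.one_apply, sqrt2sq] <;> ring_nf <;> norm_num [sqrt2sq']

lemma tau_trace : tauState.trace = 1 := by
  simp [Matrix.trace, Matrix.diag, tauState, vecMulVec, ketPhi3, ketPsi3, ketXi3,
    Fintype.sum_prod_type, Fin.sum_univ_three, Prod.ext_iff]
  ring_nf
  norm_num [sqrt2sq']

lemma rclike_coe (r : ℝ) : (RCLike.ofReal r : ℂ) = (r : ℂ) := rfl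

lemma tau_sq : tauState * tauState = ((1 / 3 : ℝ) : ℂ) • tauState := by
  have pp : (∑ p : Fin 3 × Fin 3, (star ketPhi3) p * ketPhi3 p) = 1 := by
    simp [ketPhi3, Fintype.sum_prod_type, Fin.sum_univ_three, Prod.ext_iff]
    norm_num [sqrt2sq]
  have qq : (∑ p : Fin 3 × Fin 3, (star ketPsi3) p * ketPsi3 p) = 1 := by
    simp [ketPsi3, Fintype.sum_prod_type, Fin.sum_univ_three, Prod.ext_iff]
    norm_num [sqrt2sq]
  have rr : (∑ p : Fin 3 × Fin 3, (star ketXi3) p * ketXi3 p) = 1 := by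
    simp [ketXi3, Fintype.sum_prod_type, Fin.sum_univ_three, Prod.ext_iff]
    norm_num [sqrt2sq]
  have pq : (∑ p : Fin 3 × Fin 3, (star ketPhi3) p * ketPsi3 p) = 0 := by
    simp [ketPhi3, ketPsi3, Fintype.sum_prod_type, Fin.sum_univ_three, Prod.ext_iff]
  have qp : (∑ p : Fin 3 × Fin 3, (star ketPsi3) p * ketPhi3 p) = 0 := by
    simp [ketPhi3, ketPsi3, Fintype.sum_prod_type, Fin.sum_univ_three, Prod.ext_iff]
  have pr : (∑ p : Fin 3 × Fin 3, (star ketPhi3) p * ketXi3 p) = 0 := by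
    simp [ketPhi3, ketXi3, Fintype.sum_prod_type, Fin.sum_univ_three, Prod.ext_iff]
  have rp : (∑ p : Fin 3 × Fin 3, (star ketXi3) p * ketPhi3 p) = 0 := by
    simp [ketPhi3, ketXi3, Fintype.sum_prod_type, Fin.sum_univ_three, Prod.ext_iff]
  have qr : (∑ p : Fin 3 × Fin 3, (star ketPsi3) p * ketXi3 p) = 0 := by
    simp [ketPsi3, ketXi3, Fintype.sum_prod_type, Fin.sum_univ_three, Prod.ext_iff]
  have rq : (∑ p : Fin 3 × Fin 3, (star ketXi3) p * ketPsi3 p) = 0 := by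
    simp [ketPsi3, ketXi3, Fintype.sum_prod_type, Fin.sum_univ_three, Prod.ext_iff]
  have e : (vecMulVec ketPhi3 (star ketPhi3) + vecMulVec ketPsi3 (star ketPsi3)
        + vecMulVec ketXi3 (star ketXi3))
      * (vecMulVec ketPhi3 (star ketPhi3) + vecMulVec ketPsi3 (star ketPsi3)
        + vecMulVec ketXi3 (star ketXi3))
      = vecMulVec ketPhi3 (star ketPhi3) + vecMulVec ketPsi3 (star ketPsi3)
        + vecMulVec ketXi3 (star ketXi3) := by
    simp only [add_mul, mul_add, vmv_mul, pp, qq, rr, pq, qp, pr, rp, qr, rq,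
      one_smul, zero_smul, add_zero, zero_add]
  unfold tauState
  rw [smul_mul_assoc, mul_smul_comm, e]

/-- uniqueness of the eigenvalue attached to an eigenvector -/
lemma eval_unique {n : Type*} [Fintype n] [DecidableEq n] {A : Matrix n n ℂ}
    (h : A.IsHermitian) (k : n) (μ : ℝ)
    (hv : A *ᵥ ⇑(h.eigenvectorBasis k) = ((μ : ℂ)) • ⇑(h.eigenvectorBasis k)) :
    h.eigenvalues k = μ := by
  have h1 := h.mulVec_eigenvectorBasis k
  have hnz : ⇑(h.eigenvectorBasis k) ≠ 0 := by
    intro hz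
    exact h.eigenvectorBasis.orthonormal.ne_zero k (by ext i; exact congrFun hz i)
  obtain ⟨i, hi⟩ : ∃ i, (h.eigenvectorBasis k) i ≠ 0 := by
    by_contra hq
    push_neg at hq
    exact hnz (funext hq)
  have h2 := congrFun (h1.symm.trans hv) i
  simp only [Pi.smul_apply, Complex.real_smul, smul_eq_mul] at h2
  have h3 := mul_right_cancel₀ hi h2
  exact Complex.ofReal_inj.mp h3

lemma real_smul_fun {n : Type*} (r : ℝ) (f : n → ℂ) : r • f = ((r : ℂ)) • f := by
  funext i
  simp [Complex.real_smul]

/-- every eigenvalue of τ is 0 or 1/3 -/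
lemma tau_eig_dichotomy (k : Fin 3 × Fin 3) :
    tau_herm.eigenvalues k = 0 ∨ tau_herm.eigenvalues k = 1 / 3 := by
  set lam := tau_herm.eigenvalues k with hlam
  have h1 : tauState *ᵥ ⇑(tau_herm.eigenvectorBasis k)
      = ((lam : ℂ)) • ⇑(tau_herm.eigenvectorBasis k) := by
    rw [tau_herm.mulVec_eigenvectorBasis k, real_smul_fun]
  have h2 : tauState *ᵥ (tauState *ᵥ ⇑(tau_herm.eigenvectorBasis k))
      = (((lam : ℂ)) * ((lam : ℂ))) • ⇑(tau_herm.eigenvectorBasis k) := by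
    rw [h1, Matrix.mulVec_smul, h1, smul_smul]
  have h3 : tauState *ᵥ (tauState *ᵥ ⇑(tau_herm.eigenvectorBasis k))
      = (((1/3 : ℝ) : ℂ) * (lam : ℂ)) • ⇑(tau_herm.eigenvectorBasis k) := by
    rw [Matrix.mulVec_mulVec, tau_sq, Matrix.smul_mulVec, h1, smul_smul]
  obtain ⟨i, hi⟩ : ∃ i, (tau_herm.eigenvectorBasis k) i ≠ 0 := by
    by_contra hq
    push_neg at hq
    exact tau_herm.eigenvectorBasis.orthonormal.ne_zero k (by ext j; exact hq j)
  have h4 := congrFun (h2.symm.trans h3) i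
  simp only [Pi.smul_apply, smul_eq_mul] at h4
  have h5 : ((lam : ℂ)) * ((lam : ℂ)) = ((1/3 : ℝ) : ℂ) * (lam : ℂ) :=
    mul_right_cancel₀ hi h4
  have h6 : lam * lam = (1/3) * lam := by exact_mod_cast h5
  have h7 : lam * (lam - 1/3) = 0 := by ring_nf; linarith [h6]
  rcases mul_eq_zero.mp h7 with h | h
  · exact Or.inl h
  · exact Or.inr (by linarith [sub_eq_zero.mp h])

/-- trace equals the sum of the eigenvalues -/
lemma trace_eq_sum_evals {n : Type*} [Fintype n] [DecidableEq n] {A : Matrix n n ℂ}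
    (h : A.IsHermitian) : A.trace = ∑ k, ((h.eigenvalues k : ℝ) : ℂ) := by
  conv_lhs => rw [h.spectral_theorem]
  rw [Unitary.conjStarAlgAut_apply, Matrix.trace_mul_cycle, Unitary.coe_star_mul_self, one_mul,
    Matrix.trace_diagonal]
  simp [Function.comp, rclike_coe]

/-- spectral decomposition as a sum of rank-one projections -/
lemma spectral_sum {n : Type*} [Fintype n] [DecidableEq n] {A : Matrix n n ℂ}
    (h : A.IsHermitian) :
    A = ∑ k, ((h.eigenvalues k : ℝ) : ℂ) •
      vecMulVec (fun i => h.eigenvectorBasis k i) (star fun i => h.eigenvectorBasis k i) := by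
  conv_lhs => rw [h.spectral_theorem]
  ext i j
  rw [Unitary.conjStarAlgAut_apply, Matrix.mul_apply]
  simp only [Matrix.mul_diagonal, Matrix.star_apply, Function.comp, Matrix.sum_apply,
    Matrix.smul_apply, vecMulVec_apply, Pi.star_apply,
    Matrix.IsHermitian.eigenvectorUnitary_apply, smul_eq_mul, RCLike.star_def,
    rclike_coe]
  exact Finset.sum_congr rfl fun k _ => by ring
lemma evalsR_tau : evalsR tauState = tau_herm.eigenvalues := by
  unfold evalsR
  rw [dif_pos tau_herm]

lemma herm_smul_one (c : ℝ) :
    (((c : ℝ) : ℂ) • (1 : Matrix (Fin 3) (Fin 3) ℂ)).IsHermitian := by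
  unfold Matrix.IsHermitian
  rw [Matrix.conjTranspose_smul, Matrix.conjTranspose_one]
  norm_num

lemma evalsR_smul_one (c : ℝ) (i : Fin 3) :
    evalsR (((c : ℝ) : ℂ) • (1 : Matrix (Fin 3) (Fin 3) ℂ)) i = c := by
  unfold evalsR
  rw [dif_pos (herm_smul_one c)]
  exact eval_unique (herm_smul_one c) i c (by
    rw [Matrix.smul_mulVec, Matrix.one_mulVec])

lemma evalsR_zero (i : Fin 3) : evalsR (0 : Matrix (Fin 3) (Fin 3) ℂ) i = 0 := by
  have h0 : (0 : Matrix (Fin 3) (Fin 3) ℂ).IsHermitian := by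
    unfold Matrix.IsHermitian; simp
  unfold evalsR
  rw [dif_pos h0]
  exact eval_unique h0 i 0 (by simp [Matrix.zero_mulVec])

lemma ptraceB_zero : ptraceB (0 : Matrix (Fin 3 × Fin 3) (Fin 3 × Fin 3) ℂ) = 0 := by
  ext a c; simp [ptraceB]

lemma ptraceA_zero : ptraceA (0 : Matrix (Fin 3 × Fin 3) (Fin 3 × Fin 3) ℂ) = 0 := by
  ext a c; simp [ptraceA]

lemma nim_self (y : ℝ) : nim y y = y := by
  unfold nim
  rcases eq_or_ne y 0 with h | h
  · simp [h]
  · rw [if_neg h, div_self h]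
    norm_num

lemma Mterm_self (η T : ℝ) : Mterm η T η = 0 := by
  unfold Mterm
  rw [nim_self, sub_self, abs_zero, zero_mul, neg_zero]

lemma trunc_tau_zero : trunc tauState 0 = 0 := by
  unfold trunc
  norm_num

lemma eigProj_tau : eigProj tauState (1/3) = (3 : ℂ) • tauState := by
  unfold eigProj
  rw [dif_pos tau_herm]
  conv_rhs => rw [spectral_sum tau_herm]
  rw [Finset.smul_sum, Finset.sum_filter]
  refine Finset.sum_congr rfl fun k _ => ?_
  rcases tau_eig_dichotomy k with h0 | h3
  · rw [if_neg (by rw [h0]; norm_num), h0]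
    norm_num
  · rw [if_pos h3, h3, smul_smul]
    norm_num

lemma trunc_tau_third : trunc tauState (1/3) = tauState := by
  unfold trunc
  rw [eigProj_tau, smul_smul]
  norm_num

lemma tau_card : (univ.filter fun k => evalsR tauState k = 1 / 3).card = 3 := by
  have hsum : ∑ k, tau_herm.eigenvalues k = 1 := by
    have h := trace_eq_sum_evals tau_herm
    rw [tau_trace] at h
    have : ((1 : ℝ) : ℂ) = ((∑ k, tau_herm.eigenvalues k : ℝ) : ℂ) := by
      push_cast
      simpa using h
    exact (Complex.ofReal_inj.mp this).symm
  rw [evalsR_tau] at *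
  have hsplit := Finset.sum_filter_add_sum_filter_not univ
    (fun k => tau_herm.eigenvalues k = 1/3) tau_herm.eigenvalues
  have h2 : ∑ k ∈ univ.filter (fun k => tau_herm.eigenvalues k = 1/3),
      tau_herm.eigenvalues k
      = ((univ.filter fun k => tau_herm.eigenvalues k = 1/3).card : ℝ) * (1/3) := by
    rw [Finset.sum_congr rfl (fun k hk => (Finset.mem_filter.mp hk).2),
      Finset.sum_const, nsmul_eq_mul]
  have h3 : ∑ k ∈ univ.filter (fun k => ¬ tau_herm.eigenvalues k = 1/3),
      tau_herm.eigenvalues k = 0 := by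
    refine Finset.sum_eq_zero fun k hk => ?_
    rcases tau_eig_dichotomy k with h | h
    · exact h
    · exact absurd h (Finset.mem_filter.mp hk).2
  rw [h2, h3, add_zero, hsum] at hsplit
  have : ((univ.filter fun k => tau_herm.eigenvalues k = 1/3).card : ℝ) = 3 := by
    linarith
  exact_mod_cast this

lemma MmeasA_tau : MmeasA tauState = 0 := by
  unfold MmeasA
  refine Finset.sum_eq_zero fun η hη => ?_
  obtain ⟨k, -, hk⟩ := Finset.mem_image.mp hη
  rw [evalsR_tau] at hk
  subst hk
  refine Finset.sum_eq_zero fun i _ => ?_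
  rcases tau_eig_dichotomy k with h | h
  · rw [h, trunc_tau_zero, ptraceB_zero, evalsR_zero]
    exact Mterm_self 0 _
  · rw [h, trunc_tau_third, tau_ptB, evalsR_smul_one]
    exact Mterm_self (1/3) _

lemma MmeasB_tau : MmeasB tauState = 0 := by
  unfold MmeasB
  refine Finset.sum_eq_zero fun η hη => ?_
  obtain ⟨k, -, hk⟩ := Finset.mem_image.mp hη
  rw [evalsR_tau] at hk
  subst hk
  refine Finset.sum_eq_zero fun i _ => ?_
  rcases tau_eig_dichotomy k with h | h
  · rw [h, trunc_tau_zero, ptraceA_zero, evalsR_zero]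
    exact Mterm_self 0 _
  · rw [h, trunc_tau_third, tau_ptA, evalsR_smul_one]
    exact Mterm_self (1/3) _

/-- for τ, both partial traces equal `(1/3)I₃`, the nonzero eigenvalue of
τ is `1/3` with multiplicity three, and `M(τ) = 0`. -/
theorem tau_partialTraces_and_Mmeas :
    ptraceB tauState = ((1 / 3 : ℝ) : ℂ) • (1 : Matrix (Fin 3) (Fin 3) ℂ) ∧
    ptraceA tauState = ((1 / 3 : ℝ) : ℂ) • (1 : Matrix (Fin 3) (Fin 3) ℂ) ∧
    (univ.filter fun k => evalsR tauState k = 1 / 3).card = 3 ∧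
    Mmeas tauState = 0 := by
  refine ⟨tau_ptB, tau_ptA, tau_card, ?_⟩
  unfold Mmeas
  rw [MmeasA_tau, MmeasB_tau]
  norm_num

end
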